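/- arXiv:2504.15505 — 2 statements merged into one kernel-verified Lean document; each statement's English description precedes it below -/
import Mathlib

section
/- Let p > 3 be prime. For S_λ = Σ_{x ∈ F_p} σ(x³ − 3x + 1 + λ(x² − x)), the variance of (S_λ)_{λ∈F_p} equals p − 2 − 1/p − 2(1 + σ(−1) + σ(−3)). -/
open Finset

section Aux
variable (p : ℕ) [Fact p.Prime]

local notation "χ" => quadraticChar (ZMod p)

private lemma char_ne2 (hp : 3 < p) : ringChar (ZMod p) ≠ 2 := by
  rw [ZMod.ringChar_zmod_n]; omega

private lemma two_ne (hp : 3 < p) : (2 : ZMod p) ≠ 0 := by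
  intro h
  have h2 : ((2:ℕ) : ZMod p) = 0 := by push_cast; exact h
  have := (ZMod.natCast_eq_zero_iff 2 p).mp h2
  have := Nat.le_of_dvd (by norm_num) this
  omega

private lemma three_ne (hp : 3 < p) : (3 : ZMod p) ≠ 0 := by
  intro h
  have h2 : ((3:ℕ) : ZMod p) = 0 := by push_cast; exact h
  have := (ZMod.natCast_eq_zero_iff 3 p).mp h2
  have := Nat.le_of_dvd (by norm_num) this
  omega

private lemma sum_chi (hp : 3 < p) : ∑ a : ZMod p, χ a = 0 :=
  quadraticChar_sum_zero (char_ne2 p hp)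

private lemma sum_chi_linear (hp : 3 < p) (a b : ZMod p) (hb : b ≠ 0) :
    ∑ l : ZMod p, χ (a + l * b) = 0 := by
  have hbij : Function.Bijective (fun l : ZMod p => a + l * b) := by
    constructor
    · intro u v h
      simp only at h
      exact mul_right_cancel₀ hb (add_left_cancel h)
    · intro u
      exact ⟨(u - a) * b⁻¹, by field_simp; ring⟩
  calc ∑ l : ZMod p, χ (a + l * b) = ∑ u : ZMod p, χ u := hbij.sum_comp χ
  _ = 0 := sum_chi p hp

private lemma sum_chi_sq (hp : 3 < p) : ∑ l : ZMod p, χ (l * l) = (p : ℤ) - 1 := by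
  have h : ∀ l : ZMod p, χ (l * l) = if l = 0 then 0 else 1 := by
    intro l
    split_ifs with hl
    · subst hl; rw [mul_zero, quadraticChar_zero]
    · rw [← sq]; exact quadraticChar_sq_one' hl
  simp_rw [h]
  rw [Finset.sum_ite, Finset.sum_const, Finset.sum_const, smul_zero, zero_add,
    nsmul_eq_mul, mul_one]
  have : (Finset.univ.filter (fun l : ZMod p => ¬ l = 0)) = Finset.univ.erase 0 := by
    ext a; simp [Finset.mem_erase, and_comm]
  rw [this, Finset.card_erase_of_mem (Finset.mem_univ _), Finset.card_univ, ZMod.card]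
  have hp1 : 1 ≤ p := by omega
  push_cast [Nat.cast_sub hp1]
  ring


private lemma sum_chi_quad0 (hp : 3 < p) (t : ZMod p) (ht : t ≠ 0) :
    ∑ l : ZMod p, χ (l * (l + t)) = -1 := by
  have h0 : ∑ l : ZMod p, χ (l * (l + t)) = ∑ l ∈ Finset.univ.erase 0, χ (l * (l + t)) := by
    rw [Finset.sum_erase _ (by rw [zero_mul, quadraticChar_zero])]
  rw [h0]
  have h1 : ∑ l ∈ Finset.univ.erase 0, χ (l * (l + t)) = ∑ u ∈ Finset.univ.erase 1, χ u := by
    apply Finset.sum_nbij' (i := fun l => 1 + t * l⁻¹) (j := fun u => t * (u - 1)⁻¹)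
    · intro l hl
      simp only [Finset.mem_erase, Finset.mem_univ, and_true] at hl ⊢
      intro h
      have : t * l⁻¹ = 0 := by linear_combination h
      rcases mul_eq_zero.mp this with h' | h'
      · exact ht h'
      · exact hl (by simpa using inv_eq_zero.mp h')
    · intro u hu
      simp only [Finset.mem_erase, Finset.mem_univ, and_true] at hu ⊢
      exact mul_ne_zero ht (inv_ne_zero (sub_ne_zero.mpr hu))
    · intro l hl
      simp only [Finset.mem_erase, Finset.mem_univ, and_true] at hl
      field_simp
      rw [add_sub_cancel_left]; exact div_self ht
    · intro u hu
      simp only [Finset.mem_erase, Finset.mem_univ, and_true] at hu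
      have h1 : u - 1 ≠ 0 := sub_ne_zero.mpr hu
      field_simp
      ring
    · intro l hl
      simp only [Finset.mem_erase, Finset.mem_univ, and_true] at hl
      have key : l * (l + t) = (1 + t * l⁻¹) * l ^ 2 := by field_simp
      rw [key, map_mul, quadraticChar_sq_one' hl, mul_one]
  rw [h1, Finset.sum_erase_eq_sub (Finset.mem_univ 1), sum_chi p hp, map_one]
  ring

private lemma sum_chi_quad (hp : 3 < p) (u v : ZMod p) :
    ∑ l : ZMod p, χ ((l + u) * (l + v)) = if u = v then (p:ℤ) - 1 else -1 := by
  split_ifs with h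
  · subst h
    rw [show (∑ l : ZMod p, χ ((l + u) * (l + u)))
        = ∑ m : ZMod p, χ (m * m) from (Equiv.addRight u).bijective.sum_comp (fun m => χ (m * m))]
    exact sum_chi_sq p hp
  · have key : ∀ l : ZMod p, (l + u) * (l + v) = (l + u) * ((l + u) + (v - u)) := by
      intro l; ring
    simp_rw [key]
    rw [show (∑ l : ZMod p, χ ((l + u) * (l + u + (v - u))))
        = ∑ m : ZMod p, χ (m * (m + (v - u))) from
        (Equiv.addRight u).bijective.sum_comp (fun m => χ (m * (m + (v - u))))]
    exact sum_chi_quad0 p hp (v - u) (sub_ne_zero.mpr (Ne.symm h))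

private lemma lemA (hp : 3 < p) (A B C D : ZMod p) (hA : B = 0 → A ≠ 0) (hC : D = 0 → C ≠ 0) :
    ∑ l : ZMod p, χ ((A + l * B) * (C + l * D)) =
      -(χ B * χ D) + (if A * D = C * B then (p:ℤ) * (if B = 0 then χ (A * C) else χ (B * D)) else 0) := by
  by_cases hB : B = 0
  · by_cases hD : D = 0
    · subst hB; subst hD
      simp only [mul_zero, add_zero, quadraticChar_zero, if_pos rfl]
      rw [Finset.sum_const, Finset.card_univ, ZMod.card, nsmul_eq_mul]
      simp
    · subst hB
      simp only [mul_zero, add_zero, quadraticChar_zero, if_pos rfl]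
      simp_rw [map_mul χ]
      rw [← Finset.mul_sum, sum_chi_linear p hp C D hD, mul_zero]
      rw [if_neg (by
        intro h
        rcases mul_eq_zero.mp h with h' | h'
        · exact hA rfl h'
        · exact hD h')]
      ring
  · by_cases hD : D = 0
    · subst hD
      simp only [mul_zero, add_zero]
      simp_rw [map_mul χ]
      rw [← Finset.sum_mul, sum_chi_linear p hp A B hB, zero_mul, quadraticChar_zero]
      rw [if_neg (by
        intro h
        rcases mul_eq_zero.mp h.symm with h' | h'
        · exact hC rfl h'
        · exact hB h')]
      ring
    · have key : ∀ l : ZMod p, (A + l * B) * (C + l * D)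
          = (B * D) * ((l + A * B⁻¹) * (l + C * D⁻¹)) := by
        intro l; field_simp; ring
      simp_rw [key, map_mul χ (B * D)]
      rw [← Finset.mul_sum, sum_chi_quad p hp (A * B⁻¹) (C * D⁻¹)]
      have hiff : A * B⁻¹ = C * D⁻¹ ↔ A * D = C * B := by
        rw [← div_eq_mul_inv, ← div_eq_mul_inv, div_eq_div_iff hB hD]
      rw [if_neg hB]
      by_cases hAD : A * D = C * B
      · rw [if_pos (hiff.mpr hAD), if_pos hAD, map_mul χ B D]
        ring
      · rw [if_neg (fun h => hAD (hiff.mp h)), if_neg hAD, map_mul χ B D]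
        ring

private lemma count_roots (hp : 3 < p) :
    ∑ x : ZMod p, (if x ^ 2 - x + 1 = 0 then (2:ℤ) else 0) = 2 * (1 + χ (-3)) := by
  by_cases h : ∃ r : ZMod p, r ^ 2 - r + 1 = 0
  · obtain ⟨r, hr⟩ := h
    have h3 : (3 : ZMod p) ≠ 0 := three_ne p hp
    have hs : (2 * r - 1 : ZMod p) ≠ 0 := by
      intro h0; exact h3 (by linear_combination 4 * hr + (-2*r + 1) * h0)
    have hne : r ≠ 1 - r := fun h0 => hs (by linear_combination h0)
    have hroot2 : (1 - r) ^ 2 - (1 - r) + 1 = 0 := by linear_combination hr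
    have hfac : ∀ x : ZMod p, x ^ 2 - x + 1 = (x - r) * (x - (1 - r)) := by
      intro x; linear_combination hr
    have hsub : ∑ x : ZMod p, (if x ^ 2 - x + 1 = 0 then (2:ℤ) else 0)
        = ∑ x ∈ ({r, 1 - r} : Finset (ZMod p)), (if x ^ 2 - x + 1 = 0 then (2:ℤ) else 0) := by
      refine (Finset.sum_subset (Finset.subset_univ _) ?_).symm
      intro x _ hx
      rw [if_neg]
      intro h0
      rw [hfac x] at h0
      rcases mul_eq_zero.mp h0 with h' | h'
      · exact hx (by simp [sub_eq_zero.mp h'])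
      · exact hx (by simp [sub_eq_zero.mp h'])
    rw [hsub, Finset.sum_insert (by simpa using hne), Finset.sum_singleton,
      if_pos hr, if_pos hroot2]
    have hχ : χ (-3) = 1 := by
      rw [show (-3 : ZMod p) = (2 * r - 1) ^ 2 by linear_combination (-4) * hr]
      exact quadraticChar_sq_one' hs
    rw [hχ]; norm_num
  · push_neg at h
    rw [Finset.sum_eq_zero (fun x _ => if_neg (h x))]
    have hχ : χ (-3) = -1 := by
      apply quadraticChar_neg_one_iff_not_isSquare.mpr
      rintro ⟨s, hs⟩
      have h2 : (2 : ZMod p) ≠ 0 := two_ne p hp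
      have h22 : (2 : ZMod p) * 2⁻¹ = 1 := mul_inv_cancel₀ h2
      exact h ((1 + s) * 2⁻¹)
        (by linear_combination (-(2⁻¹:ZMod p) * 2⁻¹) * hs + ((s - 1) * 2⁻¹ - 1) * h22)
    rw [hχ]; norm_num

private lemma perx (hp : 3 < p) (x : ZMod p) :
    ∑ y : ZMod p, (if (x^3 - 3*x + 1) * (y^2 - y) = (y^3 - 3*y + 1) * (x^2 - x)
        then (if x^2 - x = 0 then χ ((x^3 - 3*x + 1) * (y^3 - 3*y + 1))
              else χ ((x^2 - x) * (y^2 - y)))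
        else 0)
    = 1 + χ (x - 1) + χ (-1) * χ x - (if x^2 - x + 1 = 0 then 2 else 0) := by
  by_cases hx0 : x = 0
  · subst hx0
    refine Eq.trans (Finset.sum_subset (Finset.subset_univ ({0, 1} : Finset (ZMod p))) ?_).symm ?_
    · intro y _ hy
      simp only [Finset.mem_insert, Finset.mem_singleton, not_or] at hy
      rw [if_neg]
      intro h0
      have h1 : y * (y - 1) = 0 := by linear_combination h0
      rcases mul_eq_zero.mp h1 with h' | h'
      · exact hy.1 h'
      · exact hy.2 (by linear_combination h')
    · rw [Finset.sum_insert (by simp), Finset.sum_singleton]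
      rw [if_pos (by norm_num), if_pos (by norm_num), if_pos (by norm_num),
        if_pos (by norm_num)]
      rw [show ((0:ZMod p)^3 - 3*0 + 1) * ((0:ZMod p)^3 - 3*0 + 1) = 1 by norm_num]
      rw [show ((0:ZMod p)^3 - 3*0 + 1) * ((1:ZMod p)^3 - 3*1 + 1) = -1 by norm_num]
      rw [map_one, quadraticChar_zero, show ((0:ZMod p) - 1) = -1 by ring]
      rw [if_neg (by norm_num : ¬((0:ZMod p)^2 - 0 + 1 = 0))]
      ring
  by_cases hx1 : x = 1
  · subst hx1
    refine Eq.trans (Finset.sum_subset (Finset.subset_univ ({0, 1} : Finset (ZMod p))) ?_).symm ?_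
    · intro y _ hy
      simp only [Finset.mem_insert, Finset.mem_singleton, not_or] at hy
      rw [if_neg]
      intro h0
      have h1 : y * (y - 1) = 0 := by linear_combination (-1 : ZMod p) * h0
      rcases mul_eq_zero.mp h1 with h' | h'
      · exact hy.1 h'
      · exact hy.2 (by linear_combination h')
    · rw [Finset.sum_insert (by simp), Finset.sum_singleton]
      rw [if_pos (by norm_num), if_pos (by norm_num), if_pos (by norm_num),
        if_pos (by norm_num)]
      rw [show ((1:ZMod p)^3 - 3*1 + 1) * ((0:ZMod p)^3 - 3*0 + 1) = -1 by norm_num]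
      rw [show ((1:ZMod p)^3 - 3*1 + 1) * ((1:ZMod p)^3 - 3*1 + 1) = 1 by norm_num]
      rw [map_one, show ((1:ZMod p) - 1) = 0 by ring, quadraticChar_zero]
      rw [if_neg (by norm_num : ¬((1:ZMod p)^2 - 1 + 1 = 0))]
      ring
  have hx1' : x - 1 ≠ 0 := sub_ne_zero.mpr hx1
  have h1x : (1 : ZMod p) - x ≠ 0 := sub_ne_zero.mpr (Ne.symm hx1)
  have hbx : x^2 - x ≠ 0 := by
    intro h
    rcases mul_eq_zero.mp (show x * (x - 1) = 0 by linear_combination h) with h' | h'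
    · exact hx0 h'
    · exact hx1' h'
  by_cases hx2 : x^2 - x + 1 = 0
  · refine Eq.trans (Finset.sum_subset (Finset.subset_univ ({x} : Finset (ZMod p))) ?_).symm ?_
    · intro y _ hy
      simp only [Finset.mem_singleton] at hy
      rw [if_neg]
      intro h0
      have hP : (y - x) * ((1 - x) * y - 1) * (x * y - x + 1) = 0 := by linear_combination h0
      rcases mul_eq_zero.mp hP with h' | h'
      · rcases mul_eq_zero.mp h' with h'' | h''
        · exact hy (by linear_combination h'')
        · have : (1 - x) * (y - x) = 0 := by linear_combination h'' + hx2
          rcases mul_eq_zero.mp this with h3 | h3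
          · exact hx1 (by linear_combination (-1 : ZMod p) * h3)
          · exact hy (by linear_combination h3)
      · have : x * (y - x) = 0 := by linear_combination h' - hx2
        rcases mul_eq_zero.mp this with h3 | h3
        · exact hx0 h3
        · exact hy (by linear_combination h3)
    · rw [Finset.sum_singleton, if_pos rfl, if_neg hbx]
      rw [show (x^2 - x) * (x^2 - x) = (x^2 - x)^2 from (sq _).symm,
        quadraticChar_sq_one' hbx]
      rw [if_pos hx2]
      have hc1 : χ (x - 1) = 1 := by
        rw [show x - 1 = x^2 by linear_combination (-1 : ZMod p) * hx2]
        exact quadraticChar_sq_one' hx0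
      have hc2 : χ (-1) * χ x = 1 := by
        rw [← map_mul]
        have hcube : (-1 * x)^3 = 1 := by linear_combination (-x - 1) * hx2
        have h1 : (χ (-1 * x))^3 = 1 := by rw [← map_pow, hcube, map_one]
        rcases quadraticChar_dichotomy (show (-1 : ZMod p) * x ≠ 0 from
          mul_ne_zero (neg_ne_zero.mpr one_ne_zero) hx0) with h | h
        · exact h
        · rw [h] at h1; norm_num at h1
      rw [hc1, hc2]; ring
  · -- generic case
    have hu0 : ((1 : ZMod p) - x)⁻¹ ≠ 0 := inv_ne_zero h1x
    have hv0 : (x - 1) * x⁻¹ ≠ 0 := mul_ne_zero hx1' (inv_ne_zero hx0)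
    have hu1 : (1 - x) * (1 - x)⁻¹ = 1 := mul_inv_cancel₀ h1x
    have hv1 : x * x⁻¹ = 1 := mul_inv_cancel₀ hx0
    have hxu : x ≠ (1 - x)⁻¹ := by
      intro h
      have h' : (1 - x) * x = 1 := by nth_rewrite 2 [h]; exact mul_inv_cancel₀ h1x
      exact hx2 (by linear_combination (-1 : ZMod p) * h')
    have hxv : x ≠ (x - 1) * x⁻¹ := by
      intro h
      have h' : x * x = (x - 1) * (x * x⁻¹) := by nth_rewrite 1 [h]; ring
      rw [hv1, mul_one] at h'
      exact hx2 (by linear_combination h')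
    have huv : ((1 : ZMod p) - x)⁻¹ ≠ (x - 1) * x⁻¹ := by
      intro h
      have h' : (1 - x) * ((x - 1) * x⁻¹) = 1 := by rw [← h]; exact mul_inv_cancel₀ h1x
      have h2 : ((1 - x) * ((x - 1) * x⁻¹)) * x = 1 * x := by rw [h']
      have h3 : (1 - x) * (x - 1) * (x⁻¹ * x) = x := by linear_combination h2
      rw [inv_mul_cancel₀ hx0, mul_one] at h3
      exact hx2 (by linear_combination (-1 : ZMod p) * h3)
    refine Eq.trans (Finset.sum_subset (Finset.subset_univ
        ({x, (1 - x)⁻¹, (x - 1) * x⁻¹} : Finset (ZMod p))) ?_).symm ?_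
    · intro y _ hy
      simp only [Finset.mem_insert, Finset.mem_singleton, not_or] at hy
      obtain ⟨hyx, hyu, hyv⟩ := hy
      rw [if_neg]
      intro h0
      have hP : (y - x) * ((1 - x) * y - 1) * (x * y - x + 1) = 0 := by linear_combination h0
      rcases mul_eq_zero.mp hP with h' | h'
      · rcases mul_eq_zero.mp h' with h'' | h''
        · exact hyx (by linear_combination h'')
        · refine hyu ?_
          have h2 : y * (1 - x) = 1 := by linear_combination h''
          calc y = y * ((1 - x) * (1 - x)⁻¹) := by rw [mul_inv_cancel₀ h1x, mul_one]
          _ = (y * (1 - x)) * (1 - x)⁻¹ := by ring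
          _ = (1 - x)⁻¹ := by rw [h2, one_mul]
      · refine hyv ?_
        have h2 : y * x = x - 1 := by linear_combination h'
        calc y = y * (x * x⁻¹) := by rw [mul_inv_cancel₀ hx0, mul_one]
        _ = (y * x) * x⁻¹ := by ring
        _ = (x - 1) * x⁻¹ := by rw [h2]
    · rw [Finset.sum_insert (by simp [hxu, hxv]), Finset.sum_insert (by simp [huv]),
        Finset.sum_singleton]
      rw [if_pos rfl, if_neg hbx]
      rw [if_pos (show (x^3 - 3*x + 1) * (((1 - x)⁻¹)^2 - (1 - x)⁻¹)
            = (((1 - x)⁻¹)^3 - 3*(1 - x)⁻¹ + 1) * (x^2 - x) by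
          linear_combination ((1 - x)⁻¹ - x) * (x * (1 - x)⁻¹ - x + 1) * hu1), if_neg hbx]
      rw [if_pos (show (x^3 - 3*x + 1) * (((x - 1) * x⁻¹)^2 - (x - 1) * x⁻¹)
            = (((x - 1) * x⁻¹)^3 - 3*((x - 1) * x⁻¹) + 1) * (x^2 - x) by
          linear_combination ((x - 1) * x⁻¹ - x) * ((1 - x) * ((x - 1) * x⁻¹) - 1) * (x - 1) * hv1),
        if_neg hbx]
      rw [show (x^2 - x) * (x^2 - x) = (x^2 - x)^2 from (sq _).symm, quadraticChar_sq_one' hbx]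
      rw [show (x^2 - x) * (((1 - x)⁻¹)^2 - (1 - x)⁻¹) = (x - 1) * (x * (x - 1)⁻¹)^2 by
        field_simp
        ring]
      rw [map_mul, quadraticChar_sq_one' (mul_ne_zero hx0 (inv_ne_zero hx1')), mul_one]
      rw [show (x^2 - x) * (((x - 1) * x⁻¹)^2 - (x - 1) * x⁻¹) = (-1 * x) * ((x - 1) * x⁻¹)^2 by
        field_simp
        ring]
      rw [map_mul, quadraticChar_sq_one' hv0, mul_one, map_mul]
      rw [if_neg hx2]
      ring

private lemma corner (x : ZMod p) (h : x^2 - x = 0) : x^3 - 3*x + 1 ≠ 0 := by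
  rcases mul_eq_zero.mp (show x * (x - 1) = 0 by linear_combination h) with h' | h'
  · subst h'
    intro h0
    norm_num at h0
  · have hx : x = 1 := by linear_combination h'
    subst hx
    intro h0
    norm_num at h0

private lemma sum1 (hp : 3 < p) :
    (∑ l : ZMod p, ∑ x : ZMod p, χ (x ^ 3 - 3 * x + 1 + l * (x ^ 2 - x)))
      = (p:ℤ) * (1 + χ (-1)) := by
  rw [Finset.sum_comm]
  have step : ∀ x : ZMod p, (∑ l : ZMod p, χ (x ^ 3 - 3 * x + 1 + l * (x ^ 2 - x)))
      = if x ^ 2 - x = 0 then (p:ℤ) * χ (x ^ 3 - 3 * x + 1) else 0 := by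
    intro x
    split_ifs with h
    · simp only [h, mul_zero, add_zero]
      rw [Finset.sum_const, Finset.card_univ, ZMod.card, nsmul_eq_mul]
    · exact sum_chi_linear p hp _ _ h
  simp_rw [step]
  refine Eq.trans (Finset.sum_subset (Finset.subset_univ ({0, 1} : Finset (ZMod p))) ?_).symm ?_
  · intro x _ hx
    simp only [Finset.mem_insert, Finset.mem_singleton, not_or] at hx
    rw [if_neg]
    intro h0
    rcases mul_eq_zero.mp (show x * (x - 1) = 0 by linear_combination h0) with h' | h'
    · exact hx.1 h'
    · exact hx.2 (by linear_combination h')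
  · rw [Finset.sum_insert (by simp), Finset.sum_singleton,
      if_pos (by norm_num), if_pos (by norm_num)]
    rw [show ((0:ZMod p) ^ 3 - 3 * 0 + 1) = 1 by norm_num,
      show ((1:ZMod p) ^ 3 - 3 * 1 + 1) = -1 by norm_num, map_one]
    ring

private lemma sum2 (hp : 3 < p) :
    (∑ l : ZMod p, (∑ x : ZMod p, χ (x ^ 3 - 3 * x + 1 + l * (x ^ 2 - x))) ^ 2)
      = (p:ℤ)^2 - 2*p - 1 - 2*p*(χ (-3)) := by
  have expand : ∀ l : ZMod p, (∑ x : ZMod p, χ (x ^ 3 - 3 * x + 1 + l * (x ^ 2 - x))) ^ 2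
      = ∑ x : ZMod p, ∑ y : ZMod p,
          χ ((x ^ 3 - 3 * x + 1 + l * (x ^ 2 - x)) * (y ^ 3 - 3 * y + 1 + l * (y ^ 2 - y))) := by
    intro l
    rw [sq, Finset.sum_mul_sum]
    simp_rw [← map_mul χ]
  simp_rw [expand]
  rw [Finset.sum_comm]
  have swap2 : ∀ x : ZMod p, (∑ l : ZMod p, ∑ y : ZMod p,
      χ ((x ^ 3 - 3 * x + 1 + l * (x ^ 2 - x)) * (y ^ 3 - 3 * y + 1 + l * (y ^ 2 - y))))
      = ∑ y : ZMod p, ∑ l : ZMod p,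
      χ ((x ^ 3 - 3 * x + 1 + l * (x ^ 2 - x)) * (y ^ 3 - 3 * y + 1 + l * (y ^ 2 - y))) :=
    fun x => Finset.sum_comm
  simp_rw [swap2]
  have inner : ∀ x y : ZMod p, (∑ l : ZMod p,
      χ ((x ^ 3 - 3 * x + 1 + l * (x ^ 2 - x)) * (y ^ 3 - 3 * y + 1 + l * (y ^ 2 - y))))
      = -(χ (x ^ 2 - x) * χ (y ^ 2 - y)) +
        (if (x ^ 3 - 3 * x + 1) * (y ^ 2 - y) = (y ^ 3 - 3 * y + 1) * (x ^ 2 - x)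
          then (p:ℤ) * (if x ^ 2 - x = 0 then χ ((x ^ 3 - 3 * x + 1) * (y ^ 3 - 3 * y + 1))
            else χ ((x ^ 2 - x) * (y ^ 2 - y))) else 0) :=
    fun x y => lemA p hp (x ^ 3 - 3 * x + 1) (x ^ 2 - x) (y ^ 3 - 3 * y + 1) (y ^ 2 - y)
      (corner p x) (corner p y)
  simp_rw [inner, Finset.sum_add_distrib]
  have hSb : ∑ x : ZMod p, χ (x ^ 2 - x) = -1 := by
    have e : ∀ x : ZMod p, x ^ 2 - x = x * (x + (-1)) := fun x => by ring
    simp_rw [e]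
    exact sum_chi_quad0 p hp (-1) (neg_ne_zero.mpr one_ne_zero)
  have part1 : ∑ x : ZMod p, ∑ y : ZMod p, -(χ (x ^ 2 - x) * χ (y ^ 2 - y)) = -1 := by
    have : ∀ x : ZMod p, ∑ y : ZMod p, -(χ (x ^ 2 - x) * χ (y ^ 2 - y))
        = -(χ (x ^ 2 - x) * (-1)) := by
      intro x
      rw [← hSb, Finset.mul_sum]
      rw [Finset.sum_neg_distrib]
    simp_rw [this, mul_neg, neg_neg, mul_one]
    rw [hSb]
  have part2 : ∑ x : ZMod p, (∑ y : ZMod p,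
      (if (x ^ 3 - 3 * x + 1) * (y ^ 2 - y) = (y ^ 3 - 3 * y + 1) * (x ^ 2 - x)
        then (p:ℤ) * (if x ^ 2 - x = 0 then χ ((x ^ 3 - 3 * x + 1) * (y ^ 3 - 3 * y + 1))
          else χ ((x ^ 2 - x) * (y ^ 2 - y))) else 0))
      = (p:ℤ) * ((p:ℤ) - 2 * (1 + χ (-3))) := by
    have hin : ∀ x : ZMod p, (∑ y : ZMod p,
        (if (x ^ 3 - 3 * x + 1) * (y ^ 2 - y) = (y ^ 3 - 3 * y + 1) * (x ^ 2 - x)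
          then (p:ℤ) * (if x ^ 2 - x = 0 then χ ((x ^ 3 - 3 * x + 1) * (y ^ 3 - 3 * y + 1))
            else χ ((x ^ 2 - x) * (y ^ 2 - y))) else 0))
        = (p:ℤ) * (1 + χ (x - 1) + χ (-1) * χ x - (if x ^ 2 - x + 1 = 0 then 2 else 0)) := by
      intro x
      have hp2 := perx p hp x
      rw [show ∀ z : ZMod p, z^2 = z ^ 2 from fun z => rfl] at hp2
      rw [← hp2, Finset.mul_sum]
      refine Finset.sum_congr rfl fun y _ => ?_
      split_ifs <;> ring
    simp_rw [hin]
    rw [← Finset.mul_sum]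
    congr 1
    rw [Finset.sum_sub_distrib, Finset.sum_add_distrib, Finset.sum_add_distrib]
    rw [Finset.sum_const, Finset.card_univ, ZMod.card, nsmul_eq_mul, mul_one]
    rw [show ∑ x : ZMod p, χ (x - 1) = ∑ t : ZMod p, χ t from
      (Equiv.subRight (1 : ZMod p)).bijective.sum_comp χ, sum_chi p hp]
    rw [← Finset.mul_sum, sum_chi p hp, mul_zero, count_roots p hp]
    ring
  rw [part1, part2]
  ring

end Aux

theorem stmt18 (p : ℕ) [Fact p.Prime] (hp : 3 < p) :
    ((((∑ l : ZMod p, (∑ x : ZMod p, quadraticChar (ZMod p) (x ^ 3 - 3 * x + 1 + l * (x ^ 2 - x))) ^ 2) : ℤ) : ℚ) / p) -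
      ((((∑ l : ZMod p, ∑ x : ZMod p, quadraticChar (ZMod p) (x ^ 3 - 3 * x + 1 + l * (x ^ 2 - x))) : ℤ) : ℚ) / p) ^ 2
      = p - 2 - 1 / p - 2 * (1 + quadraticChar (ZMod p) (-1) + quadraticChar (ZMod p) (-3)) := by
  rw [sum1 p hp, sum2 p hp]
  have hq1 : ((quadraticChar (ZMod p) (-1) : ℤ) : ℚ) ^ 2 = 1 := by
    have h := quadraticChar_sq_one (show (-1 : ZMod p) ≠ 0 from neg_ne_zero.mpr one_ne_zero)
    exact_mod_cast congrArg (fun t : ℤ => (t : ℚ)) h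
  have hp0 : (p : ℚ) ≠ 0 := Nat.cast_ne_zero.mpr (by omega)
  push_cast
  generalize hA : ((quadraticChar (ZMod p) (-1) : ℤ) : ℚ) = A at hq1 ⊢
  generalize hB : ((quadraticChar (ZMod p) (-3) : ℤ) : ℚ) = B
  field_simp
  linear_combination (-(p:ℚ)) * hq1
end

section
/- Let p > 3 be prime. For S_λ = Σ_{x ∈ F_p} σ(x³ − x + λ(x² − x)) (the Legendre family up to reparameterization), the variance of (S_λ)_{λ∈F_p} equals p − 2 − 1/p. -/
open Finset

section helpers

variable {F : Type*} [Field F] [Fintype F] [DecidableEq F]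

lemma qc_sum_shift (a : F) :
    ∑ x : F, quadraticChar F (a + x) = ∑ x : F, quadraticChar F x :=
  Fintype.sum_equiv (Equiv.addLeft a) _ _ (fun _ => rfl)

lemma qc_sum_mul_shift (hF : ringChar F ≠ 2) {c : F} (hc : c ≠ 0) :
    ∑ x : F, quadraticChar F (x * (x + c)) = -1 := by
  rw [← Finset.sum_erase (f := fun x : F => quadraticChar F (x * (x + c))) (a := 0)
    univ (by simp)]
  have key : ∀ x ∈ (univ : Finset F).erase 0,
      quadraticChar F (x * (x + c)) = quadraticChar F (1 + c * x⁻¹) := by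
    intro x hx
    have hx0 : x ≠ 0 := Finset.ne_of_mem_erase hx
    have : x * (x + c) = x ^ 2 * (1 + c * x⁻¹) := by field_simp
    rw [this, map_mul, quadraticChar_sq_one' hx0, one_mul]
  rw [Finset.sum_congr rfl key]
  have hbij : ∑ x ∈ (univ : Finset F).erase 0, quadraticChar F (1 + c * x⁻¹)
      = ∑ u ∈ (univ : Finset F).erase 1, quadraticChar F u := by
    apply Finset.sum_nbij' (fun x => 1 + c * x⁻¹) (fun u => c * (u - 1)⁻¹)
    · intro x hx
      have hx0 : x ≠ 0 := Finset.ne_of_mem_erase hx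
      simp only [Finset.mem_erase, Finset.mem_univ, and_true]
      intro h
      have : c * x⁻¹ = 0 := by linear_combination h
      rcases mul_eq_zero.mp this with h' | h'
      · exact hc h'
      · exact hx0 (inv_eq_zero.mp h')
    · intro u hu
      have hu1 : u ≠ 1 := Finset.ne_of_mem_erase hu
      simp only [Finset.mem_erase, Finset.mem_univ, and_true]
      intro h
      rcases mul_eq_zero.mp h with h' | h'
      · exact hc h'
      · exact hu1 (by have := inv_eq_zero.mp h'; linear_combination this)
    · intro x hx
      have hx0 : x ≠ 0 := Finset.ne_of_mem_erase hx
      field_simp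
      simp [hc]
    · intro u hu
      have hu1 : u ≠ 1 := Finset.ne_of_mem_erase hu
      have : u - 1 ≠ 0 := sub_ne_zero.mpr hu1
      field_simp
      ring
    · intro x hx; rfl
  rw [hbij, Finset.sum_erase_eq_sub (Finset.mem_univ 1), quadraticChar_sum_zero hF,
    map_one]
  norm_num

lemma qc_sum_two_shifts (hF : ringChar F ≠ 2) (a b : F) :
    ∑ l : F, quadraticChar F ((a + l) * (b + l))
      = if a = b then (Fintype.card F : ℤ) - 1 else -1 := by
  by_cases hab : a = b
  · subst hab
    simp only [if_true]
    rw [← Finset.sum_erase (f := fun l : F => quadraticChar F ((a + l) * (a + l)))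
      (a := -a) univ (by simp)]
    have key : ∀ l ∈ (univ : Finset F).erase (-a),
        quadraticChar F ((a + l) * (a + l)) = 1 := by
      intro l hl
      have hl0 : a + l ≠ 0 := by
        intro h
        exact Finset.ne_of_mem_erase hl (by linear_combination h)
      rw [← sq, quadraticChar_sq_one' hl0]
    rw [Finset.sum_congr rfl key, Finset.sum_const,
      Finset.card_erase_of_mem (Finset.mem_univ _), Finset.card_univ]
    have h1 : 1 ≤ Fintype.card F := Fintype.card_pos
    simp only [nsmul_eq_mul, mul_one]
    omega
  · simp only [hab, if_false]
    have step : ∀ l : F, (a + l) * (b + l) = (a + l) * ((a + l) + (b - a)) := by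
      intro l; ring
    simp_rw [step]
    have := Fintype.sum_equiv (Equiv.addLeft a)
      (fun l => quadraticChar F ((a + l) * ((a + l) + (b - a))))
      (fun u => quadraticChar F (u * (u + (b - a)))) (fun l => rfl)
    rw [this]
    exact qc_sum_mul_shift hF (sub_ne_zero.mpr (Ne.symm hab))

end helpers

theorem stmt19 (p : ℕ) [Fact p.Prime] (hp : 3 < p) :
    ((((∑ l : ZMod p, (∑ x : ZMod p, quadraticChar (ZMod p) (x ^ 3 - x + l * (x ^ 2 - x))) ^ 2) : ℤ) : ℚ) / p) -
      ((((∑ l : ZMod p, ∑ x : ZMod p, quadraticChar (ZMod p) (x ^ 3 - x + l * (x ^ 2 - x))) : ℤ) : ℚ) / p) ^ 2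
      = p - 2 - 1 / p := by
  have hprime := Fact.out (p := p.Prime)
  have hchar : ringChar (ZMod p) ≠ 2 := by
    rw [ZMod.ringChar_zmod_n]; omega
  set χ := quadraticChar (ZMod p) with hχ
  set A : ZMod p → ℤ := fun x => χ (x * (x - 1)) with hA
  -- factorization
  have hfac : ∀ l x : ZMod p, χ (x ^ 3 - x + l * (x ^ 2 - x))
      = A x * χ ((x + 1) + l) := by
    intro l x
    have : x ^ 3 - x + l * (x ^ 2 - x) = (x * (x - 1)) * ((x + 1) + l) := by ring
    rw [this, map_mul]
  -- first moment
  have hM1 : (∑ l : ZMod p, ∑ x : ZMod p, χ (x ^ 3 - x + l * (x ^ 2 - x))) = 0 := by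
    rw [Finset.sum_comm]
    apply Finset.sum_eq_zero
    intro x _
    simp_rw [hfac, ← Finset.mul_sum]
    rw [qc_sum_shift, quadraticChar_sum_zero hchar, mul_zero]
  -- T = ∑ A = -1
  have hT : (∑ x : ZMod p, A x) = -1 := by
    have : ∀ x : ZMod p, A x = χ (x * (x + (-1))) := by
      intro x; simp only [hA]; ring_nf
    simp_rw [this]
    exact qc_sum_mul_shift hchar (by
      simp only [ne_eq, neg_eq_zero]
      exact one_ne_zero)
  -- ∑ A^2 = p - 2
  have hT2 : (∑ x : ZMod p, (A x) ^ 2) = (p : ℤ) - 2 := by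
    have h01 : (0 : ZMod p) ≠ 1 := zero_ne_one
    rw [← Finset.sum_erase (f := fun x : ZMod p => (A x) ^ 2) (a := 1)
        univ (by simp [hA, hχ]),
      ← Finset.sum_erase (f := fun x : ZMod p => (A x) ^ 2) (a := 0)
        _ (by simp [hA, hχ])]
    have key : ∀ x ∈ ((univ : Finset (ZMod p)).erase 1).erase 0, (A x) ^ 2 = 1 := by
      intro x hx
      have hx0 : x ≠ 0 := Finset.ne_of_mem_erase hx
      have hx1 : x ≠ 1 := Finset.ne_of_mem_erase (Finset.mem_of_mem_erase hx)
      have : x * (x - 1) ≠ 0 :=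
        mul_ne_zero hx0 (sub_ne_zero.mpr hx1)
      exact quadraticChar_sq_one this
    rw [Finset.sum_congr rfl key, Finset.sum_const,
      Finset.card_erase_of_mem, Finset.card_erase_of_mem (Finset.mem_univ _),
      Finset.card_univ, ZMod.card]
    · simp only [nsmul_eq_mul, mul_one]
      omega
    · exact Finset.mem_erase.mpr ⟨h01, Finset.mem_univ _⟩
  -- second moment
  have hM2 : (∑ l : ZMod p, (∑ x : ZMod p, χ (x ^ 3 - x + l * (x ^ 2 - x))) ^ 2)
      = (p : ℤ) ^ 2 - 2 * p - 1 := by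
    have expand : ∀ l : ZMod p, (∑ x : ZMod p, χ (x ^ 3 - x + l * (x ^ 2 - x))) ^ 2
        = ∑ x : ZMod p, ∑ y : ZMod p,
            χ (x ^ 3 - x + l * (x ^ 2 - x)) * χ (y ^ 3 - y + l * (y ^ 2 - y)) := by
      intro l; rw [sq, Finset.sum_mul_sum]
    simp_rw [expand]
    rw [Finset.sum_comm]
    have swap2 : ∀ x : ZMod p,
        (∑ l : ZMod p, ∑ y : ZMod p,
          χ (x ^ 3 - x + l * (x ^ 2 - x)) * χ (y ^ 3 - y + l * (y ^ 2 - y)))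
        = ∑ y : ZMod p, ∑ l : ZMod p,
          χ (x ^ 3 - x + l * (x ^ 2 - x)) * χ (y ^ 3 - y + l * (y ^ 2 - y)) := by
      intro x; rw [Finset.sum_comm]
    simp_rw [swap2]
    have inner : ∀ x y : ZMod p,
        (∑ l : ZMod p, χ (x ^ 3 - x + l * (x ^ 2 - x)) * χ (y ^ 3 - y + l * (y ^ 2 - y)))
        = A x * A y * (-1) + (if x = y then (p : ℤ) * (A x * A y) else 0) := by
      intro x y
      have : ∀ l : ZMod p,
          χ (x ^ 3 - x + l * (x ^ 2 - x)) * χ (y ^ 3 - y + l * (y ^ 2 - y))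
          = A x * A y * χ (((x + 1) + l) * ((y + 1) + l)) := by
        intro l
        rw [hfac, hfac, map_mul]
        ring
      simp_rw [this, ← Finset.mul_sum]
      rw [qc_sum_two_shifts hchar (x + 1) (y + 1), ZMod.card]
      have hiff : (x + 1 = y + 1) ↔ (x = y) := add_left_inj 1
      by_cases hxy : x = y
      · simp [hxy]; ring
      · rw [if_neg (fun h => hxy (hiff.mp h)), if_neg hxy]
        ring
    simp_rw [inner]
    rw [Finset.sum_congr rfl (fun x _ => Finset.sum_add_distrib), Finset.sum_add_distrib]
    have part1 : (∑ x : ZMod p, ∑ y : ZMod p, A x * A y * (-1)) = -1 := by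
      have : ∀ x : ZMod p, (∑ y : ZMod p, A x * A y * (-1))
          = A x * ((∑ y : ZMod p, A y) * (-1)) := by
        intro x; simp_rw [mul_assoc, ← Finset.mul_sum, Finset.sum_mul]
      simp_rw [this, ← Finset.sum_mul, hT]
      ring
    have part2 : (∑ x : ZMod p, ∑ y : ZMod p,
        (if x = y then (p : ℤ) * (A x * A y) else 0)) = (p : ℤ) * ((p : ℤ) - 2) := by
      have : ∀ x : ZMod p, (∑ y : ZMod p, (if x = y then (p : ℤ) * (A x * A y) else 0))
          = (p : ℤ) * (A x) ^ 2 := by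
        intro x
        rw [Finset.sum_ite_eq _ x (fun y => (p : ℤ) * (A x * A y))]
        simp [sq]
      simp_rw [this, ← Finset.mul_sum, hT2]
    rw [part1, part2]
    ring
  rw [hM1, hM2]
  have hp0 : (p : ℚ) ≠ 0 := Nat.cast_ne_zero.mpr (by omega)
  push_cast
  field_simp
  ring
end
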